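/- For every integer t ≥ 0, |P_t| = |K'_t|, i.e., the number of positions with lcp-value t (excluding position 1) equals the number of non-last children of explicit suffix-tree nodes of depth t. -/
import Mathlib


/-- 1-based access to the `i`-th character of `T`. -/
def idx (T : List ℕ) (i : ℕ) : ℕ := T.getD (i - 1) 0

/-- The suffix `T[i..n]` (1-based). -/
def sufx (T : List ℕ) (i : ℕ) : List ℕ := T.drop (i - 1)

/-- Occurrence positions of `P` in `T`: `Occ(T,P) = {i ∈ [1, n−|P|+1] : P = T[i..i+|P|−1]}`. -/
def OccF (T P : List ℕ) : Finset ℕ :=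
  (Finset.Icc 1 (T.length - P.length + 1)).filter (fun i => P <+: T.drop (i - 1))

/-- `children(P) = {Pc : c ∈ Σ, Pc is a substring of T}`. -/
def childrenSet (σ : ℕ) (T P : List ℕ) : Set (List ℕ) :=
  {Q | ∃ c ∈ Finset.Icc 1 σ, Q = P ++ [c] ∧ (P ++ [c]) <:+: T}

/-- Starting positions of the maximal runs of equal characters in `L[1..n]`. -/
def SstartSet (n : ℕ) (L : ℕ → ℕ) : Finset ℕ :=
  (Finset.Icc 1 n).filter (fun i => i = 1 ∨ L i ≠ L (i - 1))

/-- `rank(S, i) = |{j ∈ S : j ≤ i}|`. -/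
def rankOf (S : Finset ℕ) (i : ℕ) : ℕ := (S.filter (fun j => j ≤ i)).card

/-- `(c, p, q)` is an answer of the range distinct query `RD(S, b, e)`:
`c` occurs in `S[b..e]`, and `p`, `q` are the first and last occurrences of `c` in `[b,e]`. -/
def RDmem (S : ℕ → ℕ) (b e c p q : ℕ) : Prop :=
  p ∈ Finset.Icc b e ∧ S p = c ∧ (∀ i ∈ Finset.Icc b e, S i = c → p ≤ i) ∧
  q ∈ Finset.Icc b e ∧ S q = c ∧ (∀ i ∈ Finset.Icc b e, S i = c → i ≤ q)

/-- `[b,e]` is the suffix-tree interval of `P`: the positions `i ∈ [1,n]` whose suffix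
`T[SA[i]..n]` has `P` as a prefix are exactly `{b,…,e}`. -/
def isIntervalOf (n : ℕ) (T : List ℕ) (SA : ℕ → ℕ) (P : List ℕ) (b e : ℕ) : Prop :=
  1 ≤ b ∧ e ≤ n ∧ ∀ i ∈ Finset.Icc 1 n, (P <+: sufx T (SA i) ↔ i ∈ Finset.Icc b e)

/-- Length of the longest common prefix of two lists. -/
def lcpLen : List ℕ → List ℕ → ℕ
  | a :: as, b :: bs => if a = b then lcpLen as bs + 1 else 0
  | _, _ => 0

/-- `𝓛_t`: substrings of `T` of length `t` whose suffix-tree node is explicit. -/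
def LsetD (σ t : ℕ) (T : List ℕ) : Set (List ℕ) :=
  {P | P <:+: T ∧ P.length = t ∧ 2 ≤ (childrenSet σ T P).ncard}

/-- `K_t = ⋃_{P ∈ 𝓛_t} children(P)`. -/
def KsetD (σ t : ℕ) (T : List ℕ) : Set (List ℕ) :=
  {Q | ∃ P ∈ LsetD σ t T, Q ∈ childrenSet σ T P}

/-- `K'_t`: members of `K_t` that are not the last child of their parent, i.e. whose
interval has a right endpoint different from that of the parent's interval. -/
def KpsetD (σ n t : ℕ) (T : List ℕ) (SA : ℕ → ℕ) : Set (List ℕ) :=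
  {Q | ∃ P ∈ LsetD σ t T, Q ∈ childrenSet σ T P ∧
    ∃ b e b' e' : ℕ, isIntervalOf n T SA P b e ∧ isIntervalOf n T SA Q b' e' ∧ e' ≠ e}


lemma lex_irrefl : ∀ x : List ℕ, ¬ List.Lex (· < ·) x x := by
  intro x
  induction x with
  | nil => intro h; cases h
  | cons a l ih =>
    intro h
    cases h with
    | cons h => exact ih h
    | rel h => exact lt_irrefl _ h

lemma lex_between (P : List ℕ) : ∀ (x y z : List ℕ), List.Lex (· < ·) x y →
    List.Lex (· < ·) y z → P <+: x → P <+: z → P <+: y := by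
  induction P with
  | nil => intro _ _ _ _ _ _ _; exact List.nil_prefix
  | cons c P ih =>
    rintro x y z hxy hyz ⟨x', rfl⟩ ⟨z', rfl⟩
    cases y with
    | nil => cases hxy
    | cons d y' =>
      cases hxy with
      | rel h1 =>
        cases hyz with
        | rel h2 => exact absurd (h1.trans h2) (lt_irrefl c)
        | cons h2 => exact absurd h1 (lt_irrefl c)
      | cons h1 =>
        cases hyz with
        | rel h2 => exact absurd h2 (lt_irrefl c)
        | cons h2 =>
          obtain ⟨y'', rfl⟩ := ih _ _ _ h1 h2 ⟨x', rfl⟩ ⟨z', rfl⟩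
          exact ⟨y'', rfl⟩

lemma lcp_take : ∀ a b : List ℕ, a.take (lcpLen a b) = b.take (lcpLen a b) := by
  intro a
  induction a with
  | nil => intro b; cases b <;> simp [lcpLen]
  | cons x as ih =>
    intro b
    cases b with
    | nil => simp [lcpLen]
    | cons y bs =>
      by_cases h : x = y
      · subst h; simp [lcpLen, ih bs]
      · simp [lcpLen, h]

lemma lcp_le_left : ∀ a b : List ℕ, lcpLen a b ≤ a.length := by
  intro a
  induction a with
  | nil => intro b; cases b <;> simp [lcpLen]
  | cons x as ih =>
    intro b
    cases b with
    | nil => simp [lcpLen]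
    | cons y bs =>
      by_cases h : x = y <;> simp [lcpLen, h]
      exact ih bs

lemma lcp_le_right : ∀ a b : List ℕ, lcpLen a b ≤ b.length := by
  intro a
  induction a with
  | nil => intro b; cases b <;> simp [lcpLen]
  | cons x as ih =>
    intro b
    cases b with
    | nil => simp [lcpLen]
    | cons y bs =>
      by_cases h : x = y <;> simp [lcpLen, h]
      exact ih bs

lemma getElem?_eq_of_take_succ {A B : List ℕ} {t : ℕ}
    (h : A.take (t + 1) = B.take (t + 1)) : A[t]? = B[t]? := by
  have := congrArg (fun l => l[t]?) h
  simpa [List.getElem?_take, Nat.lt_succ_self] using this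

lemma le_lcp : ∀ (P a b : List ℕ), P <+: a → P <+: b → P.length ≤ lcpLen a b := by
  intro P
  induction P with
  | nil => simp
  | cons c P ih =>
    rintro a b ⟨a', rfl⟩ ⟨b', rfl⟩
    simp only [lcpLen, List.cons_append, if_pos rfl]
    simpa using ih _ _ ⟨a', rfl⟩ ⟨b', rfl⟩

lemma lcp_get_ne : ∀ a b : List ℕ, a ≠ b → a[lcpLen a b]? ≠ b[lcpLen a b]? := by
  intro a
  induction a with
  | nil =>
    intro b hne
    cases b with
    | nil => exact absurd rfl hne
    | cons y bs => simp [lcpLen]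
  | cons x as ih =>
    intro b hne
    cases b with
    | nil => simp [lcpLen]
    | cons y bs =>
      by_cases h : x = y
      · subst h
        have hne' : as ≠ bs := by intro h'; exact hne (by rw [h'])
        simpa [lcpLen] using ih bs hne'
      · simp [lcpLen, h]

lemma take_eq_of_le_lcp (a b : List ℕ) (k : ℕ) (hk : k ≤ lcpLen a b) :
    a.take k = b.take k := by
  have h := lcp_take a b
  calc a.take k = (a.take (lcpLen a b)).take k := by
        rw [List.take_take, min_eq_left hk]
    _ = (b.take (lcpLen a b)).take k := by rw [h]
    _ = b.take k := by rw [List.take_take, min_eq_left hk]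

lemma sufx_length (T : List ℕ) (n j : ℕ) (hlen : T.length = n) (hj : j ∈ Finset.Icc 1 n) :
    (sufx T j).length = n - j + 1 := by
  simp only [Finset.mem_Icc] at hj
  simp only [sufx, List.length_drop, hlen]
  omega

lemma suffix_prefix_eq (T : List ℕ) (n : ℕ) (hlen : T.length = n)
    (hdollar : ∀ i ∈ Finset.Icc 1 (n - 1), idx T i ≠ idx T n)
    (j k : ℕ) (hj : j ∈ Finset.Icc 1 n) (hk : k ∈ Finset.Icc 1 n)
    (h : sufx T j <+: sufx T k) : j = k := by
  have hj' := hj; have hk' := hk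
  simp only [Finset.mem_Icc] at hj' hk'
  have hlj := sufx_length T n j hlen hj
  have hlk := sufx_length T n k hlen hk
  have hle := h.length_le
  rw [hlj, hlk] at hle
  by_contra hne
  have hklt : k < j := by omega
  obtain ⟨r, hr⟩ := h
  have q : (sufx T k)[n - j]? = (sufx T j)[n - j]? := by
    rw [← hr, List.getElem?_append, if_pos (by omega)]
  simp only [sufx, List.getElem?_drop] at q
  apply hdollar (k + n - j) (by simp only [Finset.mem_Icc]; omega)
  simp only [idx, List.getD_eq_getElem?_getD]
  have e1 : k + n - j - 1 = (k - 1) + (n - j) := by omega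
  have e2 : n - 1 = (j - 1) + (n - j) := by omega
  rw [e1, e2, q]

lemma exists_interval (n : ℕ) (T : List ℕ) (SA : ℕ → ℕ)
    (hSA_sorted : ∀ i j, i ∈ Finset.Icc 1 n → j ∈ Finset.Icc 1 n → i < j →
      List.Lex (· < ·) (sufx T (SA i)) (sufx T (SA j)))
    (P : List ℕ) (i0 : ℕ) (hi0 : i0 ∈ Finset.Icc 1 n) (hpre : P <+: sufx T (SA i0)) :
    ∃ b e, isIntervalOf n T SA P b e ∧ b ≤ e := by
  classical
  set S := (Finset.Icc 1 n).filter (fun i => P <+: sufx T (SA i)) with hS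
  have hne : S.Nonempty := ⟨i0, by simp only [hS, Finset.mem_filter]; exact ⟨hi0, hpre⟩⟩
  set b := S.min' hne
  set e := S.max' hne
  have hbS : b ∈ S := S.min'_mem hne
  have heS : e ∈ S := S.max'_mem hne
  simp only [hS, Finset.mem_filter, Finset.mem_Icc] at hbS heS
  refine ⟨b, e, ⟨hbS.1.1, heS.1.2, ?_⟩, S.min'_le _ (S.max'_mem hne)⟩
  intro i hi
  constructor
  · intro hp
    have hiS : i ∈ S := by simp only [hS, Finset.mem_filter]; exact ⟨hi, hp⟩
    simp only [Finset.mem_Icc]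
    exact ⟨S.min'_le i hiS, S.le_max' i hiS⟩
  · intro hie
    simp only [Finset.mem_Icc] at hie
    rcases eq_or_lt_of_le hie.1 with hbi | hbi
    · rw [← hbi]; exact hbS.2
    rcases eq_or_lt_of_le hie.2 with hie2 | hie2
    · rw [hie2]; exact heS.2
    exact lex_between P _ _ _
      (hSA_sorted b i (by simp only [Finset.mem_Icc]; exact ⟨hbS.1.1, hbS.1.2⟩) hi hbi)
      (hSA_sorted i e hi (by simp only [Finset.mem_Icc]; exact ⟨heS.1.1, heS.1.2⟩) hie2)
      hbS.2 heS.2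


theorem stmt10
    (σ n : ℕ) (T : List ℕ)
    (hn : 2 ≤ n) (hlen : T.length = n)
    (halpha : ∀ c ∈ T, c ∈ Finset.Icc 1 σ)
    (hocc : ∀ c ∈ Finset.Icc 1 σ, c ∈ T)
    (hdollar : ∀ i ∈ Finset.Icc 1 (n - 1), idx T i ≠ idx T n)
    (SA : ℕ → ℕ)
    (hSA_mem : ∀ i ∈ Finset.Icc 1 n, SA i ∈ Finset.Icc 1 n)
    (hSA_surj : ∀ j ∈ Finset.Icc 1 n, ∃ i ∈ Finset.Icc 1 n, SA i = j)
    (hSA_sorted : ∀ i j, i ∈ Finset.Icc 1 n → j ∈ Finset.Icc 1 n → i < j →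
      List.Lex (· < ·) (sufx T (SA i)) (sufx T (SA j)))
    (LF : ℕ → ℕ)
    (hLF_mem : ∀ i ∈ Finset.Icc 1 n, LF i ∈ Finset.Icc 1 n)
    (hLF : ∀ i ∈ Finset.Icc 1 n, SA i ≠ 1 → SA (LF i) = SA i - 1)
    (hLF1 : ∀ i ∈ Finset.Icc 1 n, SA i = 1 → SA (LF i) = n)
    (L : ℕ → ℕ)
    (hL : ∀ i ∈ Finset.Icc 1 n, L i = idx T (SA (LF i)))
    (LCP : ℕ → ℕ)
    (hLCP1 : LCP 1 = 0)
    (hLCP : ∀ i ∈ Finset.Icc 2 n, LCP i = lcpLen (sufx T (SA (i - 1))) (sufx T (SA i)))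
 :
    ∀ t : ℕ, ((Finset.Icc 2 n).filter (fun i => LCP i = t)).card
      = (KpsetD σ n t T SA).ncard := by
  intro t
  classical
  set F := (Finset.Icc 2 n).filter (fun i => LCP i = t) with hF
  -- basic membership facts
  have hm1 : ∀ i ∈ Finset.Icc 2 n, i ∈ Finset.Icc 1 n ∧ i - 1 ∈ Finset.Icc 1 n ∧ 2 ≤ i ∧ i ≤ n := by
    intro i hi
    simp only [Finset.mem_Icc] at hi ⊢
    omega
  -- suffixes are pairwise non-prefix
  have hnopre : ∀ i j, i ∈ Finset.Icc 1 n → j ∈ Finset.Icc 1 n →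
      sufx T (SA i) <+: sufx T (SA j) → i = j := by
    intro i j hi hj hp
    have hSAij : SA i = SA j :=
      suffix_prefix_eq T n hlen hdollar (SA i) (SA j) (hSA_mem i hi) (hSA_mem j hj) hp
    by_contra hne
    rcases lt_or_gt_of_ne hne with h | h
    · have hx := hSA_sorted i j hi hj h
      rw [hSAij] at hx
      exact lex_irrefl _ hx
    · have hx := hSA_sorted j i hj hi h
      rw [hSAij] at hx
      exact lex_irrefl _ hx
  -- any prefix of a suffix is an infix of T
  have hinfix : ∀ j ∈ Finset.Icc 1 n, ∀ X : List ℕ, X <+: sufx T (SA j) → X <:+: T := by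
    intro j _ X hX
    exact hX.isInfix.trans (List.drop_suffix _ _).isInfix
  -- key facts about a position with LCP value t
  have hkey : ∀ i ∈ Finset.Icc 2 n, LCP i = t →
      t < (sufx T (SA (i - 1))).length ∧ t < (sufx T (SA i)).length ∧
      (sufx T (SA (i - 1))).take t = (sufx T (SA i)).take t ∧
      (sufx T (SA (i - 1)))[t]? ≠ (sufx T (SA i))[t]? := by
    intro i hi hlcp
    obtain ⟨hiI, hi1I, hi2, hin⟩ := hm1 i hi
    have hne : i - 1 ≠ i := by omega
    have hl : lcpLen (sufx T (SA (i - 1))) (sufx T (SA i)) = t := (hLCP i hi).symm.trans hlcp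
    have hnp1 : ¬ (sufx T (SA (i - 1)) <+: sufx T (SA i)) :=
      fun h => hne (hnopre _ _ hi1I hiI h)
    have hnp2 : ¬ (sufx T (SA i) <+: sufx T (SA (i - 1))) :=
      fun h => hne (hnopre _ _ hiI hi1I h).symm
    have habne : sufx T (SA (i - 1)) ≠ sufx T (SA i) :=
      fun h => hnp1 (h ▸ List.prefix_refl _)
    have htake : (sufx T (SA (i - 1))).take t = (sufx T (SA i)).take t :=
      take_eq_of_le_lcp _ _ t (le_of_eq hl.symm)
    have h1 : t < (sufx T (SA (i - 1))).length := by
      by_contra hle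
      push_neg at hle
      apply hnp1
      rw [List.prefix_iff_eq_take]
      have hlen1 : (sufx T (SA (i - 1))).length = t := by
        have := lcp_le_left (sufx T (SA (i - 1))) (sufx T (SA i))
        omega
      rw [hlen1, ← htake, List.take_of_length_le (le_of_eq hlen1)]
    have h2 : t < (sufx T (SA i)).length := by
      by_contra hle
      push_neg at hle
      apply hnp2
      rw [List.prefix_iff_eq_take]
      have hlen2 : (sufx T (SA i)).length = t := by
        have h3 := lcp_le_right (sufx T (SA (i - 1))) (sufx T (SA i))
        omega
      rw [hlen2, htake]
      exact (List.take_of_length_le (le_of_eq hlen2)).symm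
    have hchar := lcp_get_ne _ _ habne
    rw [hl] at hchar
    exact ⟨h1, h2, htake, hchar⟩
  -- the map i ↦ (sufx T (SA (i-1))).take (t+1) sends F into K'_t
  have himg : ∀ i ∈ F, (sufx T (SA (i - 1))).take (t + 1) ∈ KpsetD σ n t T SA := by
    intro i hiF
    rw [hF, Finset.mem_filter] at hiF
    obtain ⟨hi, hlcp⟩ := hiF
    obtain ⟨h1, h2, htake, hchar⟩ := hkey i hi hlcp
    obtain ⟨hiI, hi1I, hi2, hin⟩ := hm1 i hi
    set A := sufx T (SA (i - 1)) with hA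
    set B := sufx T (SA i) with hB
    set c1 := A[t]'h1 with hc1
    set c2 := B[t]'h2 with hc2
    have hQ1 : A.take (t + 1) = A.take t ++ [c1] := by
      rw [List.take_succ, List.getElem?_eq_getElem h1]
      rfl
    have hQ2 : B.take (t + 1) = A.take t ++ [c2] := by
      rw [List.take_succ, List.getElem?_eq_getElem h2, htake]
      rfl
    have hcne : c1 ≠ c2 := by
      intro h
      apply hchar
      rw [List.getElem?_eq_getElem h1, List.getElem?_eq_getElem h2, hc1, hc2] at *
      rw [h]
    have hPA : A.take t <+: A := List.take_prefix _ _
    have hPB : A.take t <+: B := by rw [htake]; exact List.take_prefix _ _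
    have hQA : A.take (t + 1) <+: A := List.take_prefix _ _
    have hQ2B : A.take t ++ [c2] <+: B := by rw [← hQ2]; exact List.take_prefix _ _
    have hc1mem : c1 ∈ Finset.Icc 1 σ := halpha c1 (List.mem_of_mem_drop (List.getElem_mem h1))
    have hc2mem : c2 ∈ Finset.Icc 1 σ := halpha c2 (List.mem_of_mem_drop (List.getElem_mem h2))
    have hch1 : A.take t ++ [c1] ∈ childrenSet σ T (A.take t) :=
      ⟨c1, hc1mem, rfl, hinfix (i - 1) hi1I _ (by rw [← hQ1]; exact List.take_prefix _ _)⟩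
    have hch2 : A.take t ++ [c2] ∈ childrenSet σ T (A.take t) :=
      ⟨c2, hc2mem, rfl, hinfix i hiI _ hQ2B⟩
    have hPlen : (A.take t).length = t := by rw [List.length_take]; omega
    have hfin : (childrenSet σ T (A.take t)).Finite := by
      apply Set.Finite.subset ((Set.finite_Icc 1 σ).image (fun c => A.take t ++ [c]))
      rintro Q ⟨c, hc, rfl, -⟩
      exact ⟨c, by simpa using hc, rfl⟩
    have h2le : 2 ≤ (childrenSet σ T (A.take t)).ncard := by
      have := (Set.one_lt_ncard hfin).mpr ⟨_, hch1, _, hch2, by simpa using hcne⟩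
      omega
    have hPL : A.take t ∈ LsetD σ t T := ⟨hinfix (i - 1) hi1I _ hPA, hPlen, h2le⟩
    obtain ⟨bP, eP, hPint, hPle⟩ := exists_interval n T SA hSA_sorted (A.take t) (i - 1) hi1I hPA
    obtain ⟨bQ, eQ, hQint, hQle⟩ :=
      exists_interval n T SA hSA_sorted (A.take (t + 1)) (i - 1) hi1I hQA
    have hie : i ∈ Finset.Icc bP eP := (hPint.2.2 i hiI).mp hPB
    have hnQB : ¬ (A.take (t + 1) <+: B) := by
      intro h
      have hlen1 : (A.take (t + 1)).length = t + 1 := by rw [List.length_take]; omega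
      rw [List.prefix_iff_eq_take, hlen1] at h
      rw [hQ1, hQ2] at h
      exact hcne (by simpa using h)
    have hniQ : i ∉ Finset.Icc bQ eQ := fun h => hnQB ((hQint.2.2 i hiI).mpr h)
    have hi1Q : i - 1 ∈ Finset.Icc bQ eQ := (hQint.2.2 (i - 1) hi1I).mp hQA
    refine ⟨A.take t, hPL,
      ⟨c1, hc1mem, hQ1, hinfix (i - 1) hi1I _ (by rw [← hQ1]; exact List.take_prefix _ _)⟩,
      bP, eP, bQ, eQ, hPint, hQint, ?_⟩
    simp only [Finset.mem_Icc] at hie hniQ hi1Q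
    omega
  -- injectivity
  have hlt : ∀ i ∈ F, ∀ i' ∈ F, i < i' →
      (sufx T (SA (i - 1))).take (t + 1) ≠ (sufx T (SA (i' - 1))).take (t + 1) := by
    intro i hiF i' hi'F hlt heq
    rw [hF, Finset.mem_filter] at hiF hi'F
    obtain ⟨hi, hlcp⟩ := hiF
    obtain ⟨hi', hlcp'⟩ := hi'F
    obtain ⟨h1, h2, htake, hchar⟩ := hkey i hi hlcp
    obtain ⟨h1', h2', htake', hchar'⟩ := hkey i' hi' hlcp'
    obtain ⟨hiI, hi1I, hi2, hin⟩ := hm1 i hi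
    obtain ⟨hi'I, hi'1I, hi'2, hi'n⟩ := hm1 i' hi'
    -- Q := take (t+1) of suffix at i-1 is a prefix of suffixes at i-1 and i'-1 but not at i
    have hQA : (sufx T (SA (i - 1))).take (t + 1) <+: sufx T (SA (i - 1)) := List.take_prefix _ _
    have hQC : (sufx T (SA (i - 1))).take (t + 1) <+: sufx T (SA (i' - 1)) := by
      rw [heq]; exact List.take_prefix _ _
    have hnQB : ¬ ((sufx T (SA (i - 1))).take (t + 1) <+: sufx T (SA i)) := by
      intro h
      have hlen1 : ((sufx T (SA (i - 1))).take (t + 1)).length = t + 1 := by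
        rw [List.length_take]; omega
      rw [List.prefix_iff_eq_take, hlen1] at h
      exact hchar (getElem?_eq_of_take_succ h)
    apply hnQB
    rcases eq_or_lt_of_le (show i ≤ i' - 1 by omega) with hcase | hcase
    · rw [← hcase] at hQC; exact hQC
    · exact lex_between _ _ _ _ (hSA_sorted (i - 1) i hi1I hiI (by omega))
        (hSA_sorted i (i' - 1) hiI hi'1I hcase) hQA hQC
  -- surjectivity
  have hsurj : ∀ Q ∈ KpsetD σ n t T SA, ∃ i ∈ F, (sufx T (SA (i - 1))).take (t + 1) = Q := by
    intro Q hQ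
    obtain ⟨P, hPL, hQch, bP, eP, bQ, eQ, hPint, hQint, hene⟩ := hQ
    obtain ⟨hPinf, hPlen, -⟩ := hPL
    obtain ⟨c, hc, rfl, hQinf⟩ := hQch
    -- find an occurrence of P ++ [c]
    obtain ⟨u, v, huv⟩ := hQinf
    have hTuv : T = u ++ ((P ++ [c]) ++ v) := by rw [← huv, List.append_assoc]
    have hQpre : P ++ [c] <+: sufx T (u.length + 1) := by
      simp only [sufx, Nat.add_sub_cancel]
      exact ⟨v, by rw [hTuv, List.drop_left]⟩
    have hjn : u.length + 1 ∈ Finset.Icc 1 n := by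
      have hlen2 : u.length + ((P ++ [c]).length + v.length) = n := by
        rw [← hlen, hTuv]
        simp only [List.length_append, List.length_cons, List.length_nil]
      have : 1 ≤ (P ++ [c]).length := by simp
      simp only [Finset.mem_Icc]
      omega
    obtain ⟨iQ, hiQn, hSAiQ⟩ := hSA_surj (u.length + 1) hjn
    have hiQmem : iQ ∈ Finset.Icc bQ eQ :=
      (hQint.2.2 iQ hiQn).mp (by rw [hSAiQ]; exact hQpre)
    simp only [Finset.mem_Icc] at hiQmem
    have hbQeQ : bQ ≤ eQ := le_trans hiQmem.1 hiQmem.2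
    have heQn : eQ ∈ Finset.Icc 1 n := by
      simp only [Finset.mem_Icc]
      exact ⟨le_trans hQint.1 hbQeQ, hQint.2.1⟩
    have hQeQ : P ++ [c] <+: sufx T (SA eQ) :=
      (hQint.2.2 eQ heQn).mpr (by simp only [Finset.mem_Icc]; exact ⟨hbQeQ, le_refl _⟩)
    have hPeQ : P <+: sufx T (SA eQ) := (List.prefix_append P [c]).trans hQeQ
    have heQP : eQ ∈ Finset.Icc bP eP := (hPint.2.2 eQ heQn).mp hPeQ
    simp only [Finset.mem_Icc] at heQP
    have heQlt : eQ < eP := lt_of_le_of_ne heQP.2 hene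
    have heP_n : eP ≤ n := hPint.2.1
    have heQ1 : 1 ≤ eQ := le_trans hQint.1 hbQeQ
    have hiIcc : eQ + 1 ∈ Finset.Icc 2 n := by simp only [Finset.mem_Icc]; omega
    have hiI : eQ + 1 ∈ Finset.Icc 1 n := by simp only [Finset.mem_Icc]; omega
    have hPi : P <+: sufx T (SA (eQ + 1)) := by
      apply (hPint.2.2 (eQ + 1) hiI).mpr
      simp only [Finset.mem_Icc]
      exact ⟨by omega, by omega⟩
    have hnQi : ¬ (P ++ [c] <+: sufx T (SA (eQ + 1))) := by
      intro h
      have := (hQint.2.2 (eQ + 1) hiI).mp h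
      simp only [Finset.mem_Icc] at this
      omega
    have hQlen : (P ++ [c]).length = t + 1 := by simp [hPlen]
    have hQtake : (sufx T (SA eQ)).take (t + 1) = P ++ [c] := by
      have h := hQeQ
      rw [List.prefix_iff_eq_take, hQlen] at h
      exact h.symm
    have hsub : eQ + 1 - 1 = eQ := by omega
    have hlcpi : LCP (eQ + 1) = t := by
      rw [hLCP (eQ + 1) hiIcc, hsub]
      apply le_antisymm
      · by_contra hgt
        push_neg at hgt
        have heq2 : (sufx T (SA eQ)).take (t + 1) = (sufx T (SA (eQ + 1))).take (t + 1) :=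
          take_eq_of_le_lcp _ _ _ (by omega)
        apply hnQi
        rw [List.prefix_iff_eq_take, hQlen, ← heq2, hQtake]
      · exact hPlen ▸ le_lcp P _ _ hPeQ hPi
    refine ⟨eQ + 1, ?_, ?_⟩
    · rw [hF, Finset.mem_filter]; exact ⟨hiIcc, hlcpi⟩
    · rw [hsub, hQtake]
  -- conclude
  have hset : KpsetD σ n t T SA = ↑(F.image (fun i => (sufx T (SA (i - 1))).take (t + 1))) := by
    ext Q
    simp only [Finset.coe_image, Set.mem_image, Finset.mem_coe]
    constructor
    · intro hQ
      obtain ⟨i, hi, hQeq⟩ := hsurj Q hQ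
      exact ⟨i, hi, hQeq⟩
    · rintro ⟨i, hi, rfl⟩
      exact himg i hi
  have hinj : Set.InjOn (fun i => (sufx T (SA (i - 1))).take (t + 1)) ↑F := by
    intro i hi i' hi' heq
    by_contra hne
    rcases lt_or_gt_of_ne hne with h | h
    · exact hlt i (Finset.mem_coe.mp hi) i' (Finset.mem_coe.mp hi') h heq
    · exact hlt i' (Finset.mem_coe.mp hi') i (Finset.mem_coe.mp hi) h heq.symm
  rw [hset, Set.ncard_coe_finset, Finset.card_image_of_injOn hinj]
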